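/- Let δ ∈ (0,1] satisfy (max_{1≤i≤m} γ_i/μ_i - 1)⁺ δ ≤ 1. Then for every x ∈ K₊ and every u ∈ Δ, δ ⟨e,x⟩⁺ ∑_{i=1}^m ψ'(-x_i) (γ_i/μ_i - 1)⁺ u_i - ∑_{i=1}^m ψ'(x_i) (x_i - ⟨e,x⟩⁺ u_i) - ⟨e,x⟩⁺ ∑_{i=1}^m ψ'(x_i) (γ_i/μ_i) u_i ≤ 0, where a⁺ = max(a,0). -/

import Mathlib

open scoped BigOperators

noncomputable section

/-- The piecewise function `ψ` from Definition 1 of the paper. -/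
def psi (t : ℝ) : ℝ :=
  if t ≤ -1 then -(1/2)
  else if t ≤ 0 then (t+1)^3 - (1/2)*(t+1)^4 - 1/2
  else t

def phi (t : ℝ) : ℝ :=
  if t ≤ -1 then 0 else if t ≤ 0 then 3*(t+1)^2 - 2*(t+1)^3 else 1

lemma hasDerivAt_P (t : ℝ) :
    HasDerivAt (fun s : ℝ => (s+1)^3 - (1/2)*(s+1)^4 - 1/2) (3*(t+1)^2 - 2*(t+1)^3) t := by
  have h1 : HasDerivAt (fun s : ℝ => s + 1) 1 t := (hasDerivAt_id t).add_const 1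
  have h3 : HasDerivAt (fun s : ℝ => (s+1)^3) (3*(t+1)^2) t := by
    simpa using h1.fun_pow 3
  have h4 : HasDerivAt (fun s : ℝ => (s+1)^4) (4*(t+1)^3) t := by
    simpa using h1.fun_pow 4
  have := (h3.fun_sub (h4.const_mul (1/2))).sub_const (1/2)
  exact this.congr_deriv (by ring)

lemma psi_eq_P {s : ℝ} (h1 : -1 ≤ s) (h2 : s ≤ 0) :
    psi s = (s+1)^3 - (1/2)*(s+1)^4 - 1/2 := by
  rcases eq_or_lt_of_le h1 with h | h
  · norm_num [psi, ← h]
  · simp [psi, not_le.mpr h, h2]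

lemma hasDerivAt_psi (t : ℝ) : HasDerivAt psi (phi t) t := by
  rcases lt_trichotomy t (-1) with h | h | h
  · have he : psi =ᶠ[nhds t] fun _ => -(1/2 : ℝ) := by
      filter_upwards [Iio_mem_nhds h] with s hs
      simp [psi, le_of_lt (Set.mem_Iio.mp hs)]
    have : HasDerivAt (fun _ : ℝ => -(1/2 : ℝ)) 0 t := hasDerivAt_const t _
    have := this.congr_of_eventuallyEq he
    simpa [phi, h.le] using this
  · subst h
    have hleft : HasDerivWithinAt psi 0 (Set.Iic (-1 : ℝ)) (-1) := by
      have : HasDerivWithinAt (fun _ : ℝ => -(1/2 : ℝ)) 0 (Set.Iic (-1 : ℝ)) (-1) :=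
        (hasDerivAt_const _ _).hasDerivWithinAt
      exact this.congr (fun s hs => by simp [psi, Set.mem_Iic.mp hs]) (by simp [psi])
    have hright : HasDerivWithinAt psi 0 (Set.Ici (-1 : ℝ)) (-1) := by
      have hP : HasDerivWithinAt (fun s : ℝ => (s+1)^3 - (1/2)*(s+1)^4 - 1/2) 0
          (Set.Icc (-1 : ℝ) 0) (-1) := by
        have := (hasDerivAt_P (-1)).hasDerivWithinAt (s := Set.Icc (-1 : ℝ) 0)
        simpa using this
      have hmem : Set.Icc (-1 : ℝ) 0 ∈ nhdsWithin (-1 : ℝ) (Set.Ici (-1 : ℝ)) :=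
        Icc_mem_nhdsGE_of_mem (by norm_num)
      have hP2 : HasDerivWithinAt (fun s : ℝ => (s+1)^3 - (1/2)*(s+1)^4 - 1/2) 0
          (Set.Ici (-1 : ℝ)) (-1) := hP.mono_of_mem_nhdsWithin hmem
      refine hP2.congr_of_eventuallyEq ?_ (by norm_num [psi])
      filter_upwards [hmem] with s hs
      exact psi_eq_P hs.1 hs.2
    have := hleft.union hright
    rw [Set.Iic_union_Ici] at this
    have := this.hasDerivAt (by simp)
    simpa [phi] using this
  · rcases lt_trichotomy t 0 with h0 | h0 | h0
    · have he : psi =ᶠ[nhds t] fun s : ℝ => (s+1)^3 - (1/2)*(s+1)^4 - 1/2 := by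
        filter_upwards [Ioo_mem_nhds h h0] with s hs
        exact psi_eq_P hs.1.le hs.2.le
      have := (hasDerivAt_P t).congr_of_eventuallyEq he
      simpa [phi, not_le.mpr h, h0.le] using this
    · subst h0
      have hleft : HasDerivWithinAt psi 1 (Set.Iic (0 : ℝ)) 0 := by
        have hP : HasDerivWithinAt (fun s : ℝ => (s+1)^3 - (1/2)*(s+1)^4 - 1/2) 1
            (Set.Icc (-1 : ℝ) 0) 0 := by
          have := (hasDerivAt_P 0).hasDerivWithinAt (s := Set.Icc (-1 : ℝ) 0)
          norm_num at this
          simpa using this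
        have hmem : Set.Icc (-1 : ℝ) 0 ∈ nhdsWithin (0 : ℝ) (Set.Iic (0 : ℝ)) :=
          Icc_mem_nhdsLE_of_mem (by norm_num)
        have hP2 := hP.mono_of_mem_nhdsWithin hmem
        refine hP2.congr_of_eventuallyEq ?_ (by norm_num [psi])
        filter_upwards [hmem] with s hs
        exact psi_eq_P hs.1 hs.2
      have hright : HasDerivWithinAt psi 1 (Set.Ici (0 : ℝ)) 0 := by
        have : HasDerivWithinAt (fun s : ℝ => s) 1 (Set.Ici (0 : ℝ)) 0 :=
          (hasDerivAt_id 0).hasDerivWithinAt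
        refine this.congr (fun s hs => ?_) (by norm_num [psi])
        have hs0 : (0:ℝ) ≤ s := hs
        rcases eq_or_lt_of_le hs0 with h1 | h1
        · rw [psi_eq_P (by linarith) (by linarith [h1.symm.le])] <;> norm_num [← h1]
        · simp [psi, not_le.mpr (show (-1:ℝ) < s by linarith), not_le.mpr h1]
      have := hleft.union hright
      rw [Set.Iic_union_Ici] at this
      have := this.hasDerivAt (by simp)
      norm_num [phi] at this ⊢
      exact this
    · have he : psi =ᶠ[nhds t] fun s : ℝ => s := by
        filter_upwards [Ioi_mem_nhds h0] with s hs
        have hs0 : (0:ℝ) < s := hs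
        simp [psi, not_le.mpr (show (-1:ℝ) < s by linarith), not_le.mpr hs0]
      have := (hasDerivAt_id t).congr_of_eventuallyEq he
      simpa [phi, not_le.mpr h, not_le.mpr h0] using this

lemma deriv_psi (t : ℝ) : deriv psi t = phi t := (hasDerivAt_psi t).deriv

lemma deriv_psi_nonneg (t : ℝ) : 0 ≤ deriv psi t := by
  rw [deriv_psi, phi]
  split_ifs with h1 h2
  · norm_num
  · nlinarith [sq_nonneg (t+1)]
  · norm_num

lemma deriv_psi_le_one (t : ℝ) : deriv psi t ≤ 1 := by
  rw [deriv_psi, phi]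
  split_ifs with h1 h2
  · norm_num
  · nlinarith [sq_nonneg t, sq_nonneg (t+1)]
  · norm_num

lemma deriv_psi_of_nonneg {t : ℝ} (h : 0 ≤ t) : deriv psi t = 1 := by
  rw [deriv_psi, phi]
  rcases eq_or_lt_of_le h with h | h
  · norm_num [← h]
  · rw [if_neg (by linarith), if_neg (by linarith)]


/-- If `δ ∈ (0,1]` satisfies `(max_i γ_i/μ_i - 1)⁺ δ ≤ 1`, then for `x ∈ K₊` and
`u ∈ Δ`,
`δ ⟨e,x⟩⁺ ∑ i, ψ'(-x_i)(γ_i/μ_i - 1)⁺ u_i - ∑ i, ψ'(x_i)(x_i - ⟨e,x⟩⁺ u_i)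
  - ⟨e,x⟩⁺ ∑ i, ψ'(x_i)(γ_i/μ_i) u_i ≤ 0`. -/
theorem stmt_4 (m : ℕ) (hm : 1 ≤ m) (μ γ : Fin m → ℝ)
    (hμ : ∀ i, 0 < μ i) (hγ : ∀ i, 0 ≤ γ i)
    (δ : ℝ) (hδ0 : 0 < δ) (hδ1 : δ ≤ 1)
    (hδγ : max ((⨆ i, γ i / μ i) - 1) 0 * δ ≤ 1)
    (x : Fin m → ℝ) (hx : 0 < ∑ i, x i)
    (u : Fin m → ℝ) (hu0 : ∀ i, 0 ≤ u i) (hu1 : ∑ i, u i = 1) :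
    δ * max (∑ i, x i) 0 * ∑ i, deriv psi (-(x i)) * max (γ i / μ i - 1) 0 * u i
      - ∑ i, deriv psi (x i) * (x i - max (∑ j, x j) 0 * u i)
      - max (∑ i, x i) 0 * ∑ i, deriv psi (x i) * (γ i / μ i) * u i ≤ 0 := by
  have hne : Nonempty (Fin m) := ⟨⟨0, hm⟩⟩
  rw [max_eq_left hx.le]
  set S := ∑ i, x i with hS
  set p : Fin m → ℝ := fun i => deriv psi (x i) with hp
  set q : Fin m → ℝ := fun i => deriv psi (-(x i)) with hq
  set r : Fin m → ℝ := fun i => γ i / μ i with hr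
  set a : Fin m → ℝ := fun i => max (r i - 1) 0 with ha
  show δ * S * (∑ i, q i * a i * u i) - (∑ i, p i * (x i - S * u i))
    - S * (∑ i, p i * r i * u i) ≤ 0
  have key : ∀ i, δ * q i * a i + p i * (1 - r i) ≤ 1 := by
    intro i
    have hq0 : 0 ≤ q i := deriv_psi_nonneg _
    have hq1 : q i ≤ 1 := deriv_psi_le_one _
    have hp0 : 0 ≤ p i := deriv_psi_nonneg _
    have hp1 : p i ≤ 1 := deriv_psi_le_one _
    have hri : 0 ≤ r i := div_nonneg (hγ i) (hμ i).le
    have haδ : a i * δ ≤ 1 := by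
      have h1 : a i ≤ max ((⨆ j, r j) - 1) 0 := by
        apply max_le_max _ le_rfl
        exact sub_le_sub_right (le_ciSup (Set.Finite.bddAbove (Set.finite_range r)) i) 1
      calc a i * δ ≤ max ((⨆ j, r j) - 1) 0 * δ :=
            mul_le_mul_of_nonneg_right h1 hδ0.le
        _ ≤ 1 := hδγ
    rcases le_total (r i) 1 with h | h
    · have ha0 : a i = 0 := max_eq_right (by simpa [ha] using h)
      rw [ha0]
      have : p i * (1 - r i) ≤ 1 * 1 :=
        mul_le_mul hp1 (by linarith) (by linarith) (by norm_num)
      nlinarith [this]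
    · have ha1 : a i = r i - 1 := max_eq_left (by simpa [ha] using h)
      rw [ha1] at haδ ⊢
      have h1 : p i * (1 - r i) ≤ 0 :=
        mul_nonpos_of_nonneg_of_nonpos hp0 (by linarith)
      have h2 : δ * q i * (r i - 1) ≤ (r i - 1) * δ := by
        nlinarith [mul_nonneg (mul_nonneg hδ0.le (sub_nonneg.2 h)) (sub_nonneg.2 hq1)]
      linarith
  have h1 : ∀ i ∈ Finset.univ, δ * S * (q i * a i * u i) + p i * (S * u i)
      - S * (p i * r i * u i) ≤ S * u i := by
    intro i _
    have hSu : 0 ≤ S * u i := mul_nonneg hx.le (hu0 i)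
    have hk : S * u i * (δ * q i * a i + p i * (1 - r i)) ≤ S * u i * 1 :=
      mul_le_mul_of_nonneg_left (key i) hSu
    nlinarith [hk]
  have E1 := Finset.sum_le_sum h1
  rw [Finset.sum_sub_distrib, Finset.sum_add_distrib, ← Finset.mul_sum (f := u), hu1,
    mul_one] at E1
  have h2 : ∀ i ∈ Finset.univ, x i ≤ p i * x i := by
    intro i _
    rcases le_or_gt 0 (x i) with h | h
    · rw [show p i = 1 from deriv_psi_of_nonneg h]; linarith
    · have h1 : p i ≤ 1 := deriv_psi_le_one _
      nlinarith [h1]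
  have E2 : S ≤ ∑ i, p i * x i := by
    have := Finset.sum_le_sum h2
    rw [← hS] at this
    exact this
  have split : ∑ i, p i * (x i - S * u i)
      = (∑ i, p i * x i) - ∑ i, p i * (S * u i) := by
    rw [← Finset.sum_sub_distrib]
    exact Finset.sum_congr rfl fun i _ => by ring
  rw [Finset.mul_sum Finset.univ (fun i => q i * a i * u i) (δ * S),
    Finset.mul_sum Finset.univ (fun i => p i * r i * u i) S, split]
  linarith [E1, E2]

end
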